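/- There exists a constant C > 0 such that for all complex numbers u and v, Re(conj(u) * (R*(u+v) - (1+i*μ)*|u+v|^2*(u+v))) ≤ C*(1 + |u|^2 + |v|^4), where R > 0 and μ ∈ ℝ are fixed parameters. -/

import Mathlib

open Complex

/-- The Ginzburg-Landau nonlinearity `Ψ₀(z) = R z - (1+iμ)|z|² z`. -/
noncomputable def Psi0 (R μ : ℝ) (z : ℂ) : ℂ :=
  R * z - (1 + μ * Complex.I) * (‖z‖ : ℂ) ^ 2 * z

lemma young4 (x y : ℝ) (hx : 0 ≤ x) (hy : 0 ≤ y) : x * y ^ 3 ≤ x ^ 4 / 4 + 3 * y ^ 4 / 4 := by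
  nlinarith [mul_nonneg hx hy, sq_nonneg (x - y), sq_nonneg (x + y), sq_nonneg (x*y - y^2),
    sq_nonneg (x^2 - y^2)]

lemma aux_young (R K a b c : ℝ) (ha : 0 ≤ a) (hb : 0 ≤ b) (hc : 0 ≤ c) (hK : 1 ≤ K) :
    R * a * c + K * b * c ^ 3 - c ^ 4 ≤ (R ^ 2 + 4 * K ^ 4 + 1) * (1 + a ^ 2 + b ^ 4) := by
  have hK0 : 0 ≤ K := le_trans zero_le_one hK
  have hy := young4 (2 * K * b) c (by positivity) hc
  nlinarith [sq_nonneg (R*a - c), sq_nonneg (c^2 - 1), sq_nonneg R, sq_nonneg a,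
    mul_nonneg (sq_nonneg R) (pow_nonneg hb 4), mul_nonneg (sq_nonneg R) (sq_nonneg a),
    mul_nonneg (pow_nonneg hK0 4) (sq_nonneg a),
    mul_nonneg (pow_nonneg hK0 4) (pow_nonneg hb 4),
    pow_nonneg hK0 4, pow_nonneg hb 4, sq_nonneg (K^2*b^2)]

theorem stmt0 (R μ : ℝ) (hR : 0 < R) :
    ∃ C : ℝ, 0 < C ∧ ∀ u v : ℂ,
      ((starRingEnd ℂ) u * Psi0 R μ (u + v)).re ≤ C * (1 + ‖u‖ ^ 2 + ‖v‖ ^ 4) := by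
  set K : ℝ := 1 + |μ| with hKdef
  have hK : 1 ≤ K := by simp [hKdef, abs_nonneg]
  refine ⟨R ^ 2 + 4 * K ^ 4 + 1, by positivity, fun u v => ?_⟩
  set w : ℂ := u + v with hw
  have ha : (0:ℝ) ≤ ‖u‖ := norm_nonneg _
  have hb : (0:ℝ) ≤ ‖v‖ := norm_nonneg _
  have hc : (0:ℝ) ≤ ‖w‖ := norm_nonneg _
  have hcw : (starRingEnd ℂ) w * w = ((‖w‖:ℂ))^2 := by
    rw [mul_comm, Complex.mul_conj]
    push_cast [← Complex.sq_norm]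
    ring
  have hsplit : (starRingEnd ℂ) u * w = ((‖w‖:ℂ))^2 - (starRingEnd ℂ) v * w := by
    rw [hw] at hcw ⊢
    rw [map_add] at hcw
    linear_combination hcw
  have key : ((starRingEnd ℂ) u * Psi0 R μ w).re =
      R * ((starRingEnd ℂ) u * w).re - ‖w‖ ^ 2 * ((starRingEnd ℂ) u * w).re
        + (μ * ‖w‖ ^ 2) * ((starRingEnd ℂ) u * w).im := by
    simp only [Psi0, mul_sub, ← mul_assoc]
    simp [Complex.mul_re, Complex.mul_im, ← Complex.ofReal_pow, Complex.ofReal_re,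
      Complex.ofReal_im]
    ring
  have hre : ((starRingEnd ℂ) u * w).re = ‖w‖ ^ 2 - ((starRingEnd ℂ) v * w).re := by
    rw [hsplit]; simp [← Complex.ofReal_pow]
  have him : ((starRingEnd ℂ) u * w).im = - ((starRingEnd ℂ) v * w).im := by
    rw [hsplit]; simp [← Complex.ofReal_pow]
  have hrbound : |((starRingEnd ℂ) u * w).re| ≤ ‖u‖ * ‖w‖ := by
    calc |((starRingEnd ℂ) u * w).re| ≤ ‖(starRingEnd ℂ) u * w‖ := Complex.abs_re_le_norm _
    _ = ‖u‖ * ‖w‖ := by rw [norm_mul, RCLike.norm_conj]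
  have hpbound : |((starRingEnd ℂ) v * w).re| ≤ ‖v‖ * ‖w‖ := by
    calc |((starRingEnd ℂ) v * w).re| ≤ ‖(starRingEnd ℂ) v * w‖ := Complex.abs_re_le_norm _
    _ = ‖v‖ * ‖w‖ := by rw [norm_mul, RCLike.norm_conj]
  have hqbound : |((starRingEnd ℂ) v * w).im| ≤ ‖v‖ * ‖w‖ := by
    calc |((starRingEnd ℂ) v * w).im| ≤ ‖(starRingEnd ℂ) v * w‖ := Complex.abs_im_le_norm _
    _ = ‖v‖ * ‖w‖ := by rw [norm_mul, RCLike.norm_conj]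
  have young := aux_young R K ‖u‖ ‖v‖ ‖w‖ ha hb hc hK
  rw [key]
  have c2 : (0:ℝ) ≤ ‖w‖ ^ 2 := sq_nonneg _
  have h1 : R * ((starRingEnd ℂ) u * w).re ≤ R * (‖u‖ * ‖w‖) := by
    have := (abs_le.mp hrbound).2
    exact mul_le_mul_of_nonneg_left this hR.le
  have h2 : - (‖w‖ ^ 2 * ((starRingEnd ℂ) u * w).re) ≤ - ‖w‖^4 + ‖w‖^2 * (‖v‖ * ‖w‖) := by
    rw [hre]
    have := (abs_le.mp hpbound).2
    nlinarith
  have h3 : (μ * ‖w‖ ^ 2) * ((starRingEnd ℂ) u * w).im ≤ |μ| * ‖w‖^2 * (‖v‖ * ‖w‖) := by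
    rw [him]
    calc (μ * ‖w‖ ^ 2) * (-((starRingEnd ℂ) v * w).im)
        ≤ |(μ * ‖w‖ ^ 2) * (-((starRingEnd ℂ) v * w).im)| := le_abs_self _
      _ = |μ| * ‖w‖^2 * |((starRingEnd ℂ) v * w).im| := by
          rw [abs_mul, abs_neg, abs_mul, _root_.abs_of_nonneg c2]
      _ ≤ |μ| * ‖w‖^2 * (‖v‖ * ‖w‖) := by
          exact mul_le_mul_of_nonneg_left hqbound (by positivity)
  have habs : |μ| = K - 1 := by simp [hKdef]
  nlinarith [mul_nonneg (mul_nonneg hb hc) c2]
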